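/- Let X, Z ∈ ℝ^{n×r} be matrices such that ZᵀX = XᵀZ and this matrix is positive semidefinite. Then λ_r(ZZᵀ)·‖Z-X‖_F² ≤ (1/(2(√2-1)))·‖ZZᵀ - XXᵀ‖_F², where λ_r(ZZᵀ) denotes the r-th largest eigenvalue of ZZᵀ. -/

import Mathlib

open Matrix

noncomputable def frob {m n : Type*} [Fintype m] [Fintype n] (A : Matrix m n ℝ) : ℝ :=
  Real.sqrt (∑ i, ∑ j, (A i j)^2)

/-- The `k`-th largest eigenvalue (1-indexed) of a Hermitian real matrix. -/
noncomputable def kthLargestEig {n : ℕ} (A : Matrix (Fin n) (Fin n) ℝ)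
    (hA : A.IsHermitian) (k : ℕ) : ℝ :=
  ((Finset.univ.val.map hA.eigenvalues).sort (· ≤ ·)).getD (n - k) 0

section helpers

lemma lemA {n : ℕ} (U : Matrix (Fin n) (Fin n) ℝ) (h1 : Uᵀ * U = 1) (g h : Fin n → ℝ) :
    (U *ᵥ g) ⬝ᵥ (U *ᵥ h) = g ⬝ᵥ h := by
  rw [dotProduct_mulVec, ← mulVec_transpose, mulVec_mulVec, h1, one_mulVec]

lemma lemB {n r : ℕ} (Z : Matrix (Fin n) (Fin r) ℝ) (U : Matrix (Fin n) (Fin n) ℝ) (e : Fin n → ℝ)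
    (h1 : Uᵀ * U = 1) (h3 : Z * Zᵀ = U * Matrix.diagonal e * Uᵀ) (g : Fin n → ℝ) :
    (Z * Zᵀ) *ᵥ (U *ᵥ g) = U *ᵥ (fun i => e i * g i) := by
  rw [h3, mulVec_mulVec, mul_assoc, mul_assoc, h1, mul_one]
  ext i
  simp only [mulVec, dotProduct, mul_diagonal]
  exact Finset.sum_congr rfl fun k _ => by ring

lemma lemC {n r : ℕ} (Z : Matrix (Fin n) (Fin r) ℝ) (U : Matrix (Fin n) (Fin n) ℝ) (e : Fin n → ℝ)
    (h1 : Uᵀ * U = 1) (h3 : Z * Zᵀ = U * Matrix.diagonal e * Uᵀ) (g : Fin n → ℝ) :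
    (Zᵀ *ᵥ (U *ᵥ g)) ⬝ᵥ (Zᵀ *ᵥ (U *ᵥ g)) = ∑ i, e i * g i ^ 2 := by
  rw [dotProduct_mulVec, vecMul_transpose, mulVec_mulVec, lemB Z U e h1 h3, lemA U h1]
  simp only [dotProduct]
  congr 1; ext i; ring

lemma spec_decomp {n : ℕ} (A : Matrix (Fin n) (Fin n) ℝ) (hA : A.IsHermitian) :
    ∃ U : Matrix (Fin n) (Fin n) ℝ, Uᵀ * U = 1 ∧
      A = U * Matrix.diagonal hA.eigenvalues * Uᵀ := by
  refine ⟨(hA.eigenvectorUnitary : Matrix (Fin n) (Fin n) ℝ), ?_, ?_⟩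
  · rw [← Matrix.conjTranspose_eq_transpose_of_trivial]
    exact Unitary.coe_star_mul_self hA.eigenvectorUnitary
  · rw [← Matrix.conjTranspose_eq_transpose_of_trivial]
    simpa [Matrix.star_eq_conjTranspose] using hA.spectral_theorem

lemma transfer {n r : ℕ} (Z : Matrix (Fin n) (Fin r) ℝ) (u : Fin n → ℝ) (v : Fin r → ℝ) :
    (Zᵀ *ᵥ u) ⬝ᵥ v = u ⬝ᵥ (Z *ᵥ v) := by
  rw [mulVec_transpose, ← dotProduct_mulVec]

lemma key_core {n r : ℕ} (Z : Matrix (Fin n) (Fin r) ℝ) (U : Matrix (Fin n) (Fin n) ℝ) (e : Fin n → ℝ)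
    (h1 : Uᵀ * U = 1) (h3 : Z * Zᵀ = U * Matrix.diagonal e * Uᵀ)
    {μ : ℝ} (hμ : 0 < μ)
    (hzero : ∀ i, ¬ μ ≤ e i → e i = 0)
    (v : Fin r → ℝ) (hv : ∀ w, Z *ᵥ w = 0 → v ⬝ᵥ w = 0) :
    μ * (v ⬝ᵥ v) ≤ (Z *ᵥ v) ⬝ᵥ (Z *ᵥ v) := by
  classical
  have h2 : U * Uᵀ = 1 := by rwa [mul_eq_one_comm] at h1
  set c : Fin n → ℝ := Uᵀ *ᵥ (Z *ᵥ v) with hc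
  have hUc : U *ᵥ c = Z *ᵥ v := by rw [hc, mulVec_mulVec, h2, one_mulVec]
  have hcz : ∀ i, e i = 0 → c i = 0 := by
    intro i hei
    have hZU : Zᵀ *ᵥ (U *ᵥ Pi.single i 1) = 0 := by
      rw [← dotProduct_self_eq_zero]
      rw [lemC Z U e h1 h3]
      rw [Finset.sum_eq_single i]
      · simp [hei]
      · intro b _ hb; simp [Pi.single_eq_of_ne hb]
      · simp
    have hci : c i = (Zᵀ *ᵥ (U *ᵥ Pi.single i 1)) ⬝ᵥ v := by
      rw [transfer]
      simp only [hc, mulVec, dotProduct, Matrix.transpose_apply, Pi.single_apply, mul_ite,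
        mul_one, mul_zero, Finset.sum_ite_eq', Finset.mem_univ, if_true, Finset.mul_sum]
    rw [hci, hZU, zero_dotProduct]
  set g : Fin n → ℝ := fun i => if μ ≤ e i then c i / e i else 0 with hg
  have heg : (fun i => e i * g i) = c := by
    ext i
    by_cases hi : μ ≤ e i
    · have hne : e i ≠ 0 := ne_of_gt (lt_of_lt_of_le hμ hi)
      simp only [hg, hi, if_true]
      field_simp
    · simp [hg, hi, hcz i (hzero i hi)]
  set m := U *ᵥ g with hm
  have hZZm : Z *ᵥ (Zᵀ *ᵥ m) = Z *ᵥ v := by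
    rw [hm, mulVec_mulVec, lemB Z U e h1 h3, heg, hUc]
  have hw : Z *ᵥ (v - Zᵀ *ᵥ m) = 0 := by
    rw [mulVec_sub, hZZm, sub_self]
  have h4 : v ⬝ᵥ (v - Zᵀ *ᵥ m) = 0 := hv _ hw
  have h5 : (Zᵀ *ᵥ m) ⬝ᵥ (v - Zᵀ *ᵥ m) = 0 := by
    rw [transfer, hw, dotProduct_zero]
  have h6 : (v - Zᵀ *ᵥ m) ⬝ᵥ (v - Zᵀ *ᵥ m) = 0 := by
    rw [sub_dotProduct, h4, h5, sub_zero]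
  have hvm : v = Zᵀ *ᵥ m :=
    sub_eq_zero.mp (dotProduct_self_eq_zero.mp h6)
  have hvv : v ⬝ᵥ v = ∑ i, e i * g i ^ 2 := by
    rw [hvm, hm, lemC Z U e h1 h3]
  have hZv : Z *ᵥ v = U *ᵥ (fun i => e i * g i) := by
    conv_lhs => rw [hvm]
    rw [hm, mulVec_mulVec, lemB Z U e h1 h3]
  have hZvZv : (Z *ᵥ v) ⬝ᵥ (Z *ᵥ v) = ∑ i, (e i * g i) ^ 2 := by
    rw [hZv, lemA U h1]
    simp only [dotProduct]
    congr 1; ext i; ring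
  rw [hvv, hZvZv, Finset.mul_sum]
  apply Finset.sum_le_sum
  intro i _
  by_cases hi : μ ≤ e i
  · have hei : (0:ℝ) ≤ e i := le_trans hμ.le hi
    have h7 : 0 ≤ e i * g i ^ 2 := mul_nonneg hei (sq_nonneg _)
    have h8 : (e i * g i)^2 = e i * (e i * g i ^2) := by ring
    nlinarith
  · simp [hg, hi]

lemma kerX_core {n r : ℕ} (X Z : Matrix (Fin n) (Fin r) ℝ) (U : Matrix (Fin n) (Fin n) ℝ)
    (e : Fin n → ℝ) (h1 : Uᵀ * U = 1) (h3 : Z * Zᵀ = U * Matrix.diagonal e * Uᵀ)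
    (hsymm : Zᵀ * X = Xᵀ * Z)
    (hor : (∀ w : Fin r → ℝ, Z *ᵥ w = 0 → w = 0) ∨ (∀ i, 0 < e i)) :
    ∀ w, Z *ᵥ w = 0 → X *ᵥ w = 0 := by
  intro w hw
  rcases hor with hinj | hpos
  · rw [hinj w hw]
    exact mulVec_zero X
  · have h2 : U * Uᵀ = 1 := by rwa [mul_eq_one_comm] at h1
    set u := X *ᵥ w with hudef
    have hZu : Zᵀ *ᵥ u = 0 := by
      rw [hudef, mulVec_mulVec, hsymm, ← mulVec_mulVec, hw, mulVec_zero]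
    have hu : u = U *ᵥ (Uᵀ *ᵥ u) := by rw [mulVec_mulVec, h2, one_mulVec]
    have hsum : ∑ i, e i * (Uᵀ *ᵥ u) i ^ 2 = 0 := by
      rw [← lemC Z U e h1 h3, ← hu, hZu, zero_dotProduct]
    have hterm : ∀ i ∈ Finset.univ, e i * (Uᵀ *ᵥ u) i ^ 2 = 0 := by
      rw [← Finset.sum_eq_zero_iff_of_nonneg]
      · exact hsum
      · exact fun i _ => mul_nonneg (hpos i).le (sq_nonneg _)
    have hUu : Uᵀ *ᵥ u = 0 := by
      ext i
      have hti := hterm i (Finset.mem_univ i)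
      have h5 := (hpos i).ne'
      have : (Uᵀ *ᵥ u) i ^ 2 = 0 := by
        rcases mul_eq_zero.mp hti with h | h
        · exact absurd h h5
        · exact h
      simpa using sq_eq_zero_iff.mp this
    rw [hu, hUu, mulVec_zero]

lemma card_filter_kth {n : ℕ} (A : Matrix (Fin n) (Fin n) ℝ) (hA : A.IsHermitian) (r : ℕ)
    (hpos : 0 < kthLargestEig A hA r) :
    min r n ≤ (Finset.univ.filter (fun i => kthLargestEig A hA r ≤ hA.eigenvalues i)).card := by
  classical
  set μ := kthLargestEig A hA r with hμ
  set L := ((Finset.univ.val.map hA.eigenvalues).sort (· ≤ ·)) with hL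
  have hlen : L.length = n := by
    rw [hL, Multiset.length_sort, Multiset.card_map]
    simp
  have hrange : n - r < L.length := by
    by_contra h
    push_neg at h
    have : μ = 0 := List.getD_eq_default L 0 h
    rw [this] at hpos
    exact lt_irrefl 0 hpos
  have hget : μ = L.get ⟨n - r, hrange⟩ := List.getD_eq_getElem L 0 hrange
  have hsorted : L.Pairwise (· ≤ ·) := Multiset.pairwise_sort _ _
  have hdropmem : ∀ x ∈ L.drop (n - r), μ ≤ x := by
    intro x hx
    obtain ⟨j, hj, rfl⟩ := List.mem_iff_getElem.mp hx
    rw [List.getElem_drop]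
    rw [hget]
    have hlt : n - r + j < L.length := by
      have := hj; simp [List.length_drop] at this ⊢; omega
    have : L.get ⟨n - r, hrange⟩ ≤ L.get ⟨n - r + j, hlt⟩ :=
      hsorted.rel_get_of_le (by simp)
    simpa using this
  have hcount : n - (n - r) ≤ L.countP (fun x => decide (μ ≤ x)) := by
    calc n - (n - r) = (L.drop (n - r)).length := by rw [List.length_drop, hlen]
    _ = (L.drop (n - r)).countP (fun x => decide (μ ≤ x)) := by
        rw [eq_comm, List.countP_eq_length]
        intro a ha
        simpa using hdropmem a ha
    _ ≤ L.countP (fun x => decide (μ ≤ x)) := (List.drop_sublist _ _).countP_le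
  have hms : L.countP (fun x => decide (μ ≤ x)) =
      Multiset.countP (fun x => μ ≤ x) (Finset.univ.val.map hA.eigenvalues) := by
    conv_rhs => rw [← Multiset.sort_eq (Finset.univ.val.map hA.eigenvalues) (· ≤ ·)]
    rfl
  have hmap : Multiset.countP (fun x => μ ≤ x) (Finset.univ.val.map hA.eigenvalues)
      = (Finset.univ.filter (fun i => μ ≤ hA.eigenvalues i)).card := by
    rw [Multiset.countP_map]
    rfl
  have hmin : min r n = n - (n - r) := by omega
  rw [hmin]
  rw [hms, hmap] at hcount
  exact hcount

lemma my_trace_tm {m n : Type*} [Fintype m] [Fintype n] (N : Matrix m n ℝ) :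
    Matrix.trace (Nᵀ * N) = ∑ i, ∑ j, (N i j)^2 := by
  rw [Matrix.trace]
  simp only [Matrix.diag, Matrix.mul_apply, Matrix.transpose_apply]
  rw [Finset.sum_comm]
  simp [sq]

lemma frob_sq {m n : Type*} [Fintype m] [Fintype n] (A : Matrix m n ℝ) :
    frob A ^ 2 = Matrix.trace (Aᵀ * A) := by
  rw [my_trace_tm, frob, Real.sq_sqrt]
  positivity

lemma frob_nonneg' {m n : Type*} [Fintype m] [Fintype n] (A : Matrix m n ℝ) :
    0 ≤ Matrix.trace (Aᵀ * A) := by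
  rw [my_trace_tm]; positivity

lemma trace_CS {m n : Type*} [Fintype m] [Fintype n] (N M : Matrix m n ℝ) :
    Matrix.trace (Nᵀ * M) ^ 2 ≤ Matrix.trace (Nᵀ * N) * Matrix.trace (Mᵀ * M) := by
  have h1 : Matrix.trace (Nᵀ * M) = ∑ p : m × n, N p.1 p.2 * M p.1 p.2 := by
    rw [Matrix.trace]
    simp only [Matrix.diag, Matrix.mul_apply, Matrix.transpose_apply]
    rw [Finset.sum_comm]
    exact (Fintype.sum_prod_type (fun p : m × n => N p.1 p.2 * M p.1 p.2)).symm
  have h2 : Matrix.trace (Nᵀ * N) = ∑ p : m × n, (N p.1 p.2)^2 := by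
    rw [my_trace_tm]
    exact (Fintype.sum_prod_type (fun p : m × n => N p.1 p.2 ^ 2)).symm
  have h3 : Matrix.trace (Mᵀ * M) = ∑ p : m × n, (M p.1 p.2)^2 := by
    rw [my_trace_tm]
    exact (Fintype.sum_prod_type (fun p : m × n => M p.1 p.2 ^ 2)).symm
  rw [h1, h2, h3]
  exact Finset.sum_mul_sq_le_sq_mul_sq _ _ _

lemma trace_quad {m k : Type*} [Fintype m] [Fintype k] (N : Matrix k k ℝ) (d : Matrix m k ℝ) :
    Matrix.trace (N * (dᵀ * d)) = ∑ i, (d i) ⬝ᵥ (N *ᵥ (d i)) := by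
  rw [Matrix.trace_mul_comm, Matrix.mul_assoc, Matrix.trace_mul_comm]
  simp only [Matrix.trace, Matrix.diag, Matrix.mul_apply, Matrix.transpose_apply, dotProduct,
    Matrix.mulVec, Finset.sum_mul, Finset.mul_sum]
  refine Finset.sum_congr rfl fun i _ => ?_
  rw [Finset.sum_comm]
  exact Finset.sum_congr rfl fun a _ => Finset.sum_congr rfl fun b _ => by ring

lemma final_scalar (c2 μ q σ a b g p R : ℝ)
    (hc2 : c2^2 = 2) (hc20 : 0 ≤ c2)
    (ha : 0 ≤ a) (hb : 0 ≤ b) (hCS : g^2 ≤ a*b) (hp : 0 ≤ p)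
    (hF6 : μ * q ≤ σ)
    (hiden : R = 2*(c2-1)*σ + (2*a + b - 2*c2*g) + (4-2*c2)*p) :
    μ * q ≤ 1/(2*(c2-1)) * R := by
  have h2c : (0:ℝ) < 2*(c2-1) := by nlinarith
  have hgle : g ≤ Real.sqrt a * Real.sqrt b := by
    have h7 : g ≤ |g| := le_abs_self g
    have h8 : |g| = Real.sqrt (g^2) := (Real.sqrt_sq_eq_abs g).symm
    have h9 : Real.sqrt (g^2) ≤ Real.sqrt (a*b) := Real.sqrt_le_sqrt hCS
    rw [Real.sqrt_mul ha] at h9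
    linarith
  have hAMGM : 2*c2*g ≤ 2*a + b := by
    have h10 := Real.sq_sqrt ha
    have h11 := Real.sq_sqrt hb
    nlinarith [sq_nonneg (c2 * Real.sqrt a - Real.sqrt b), Real.sqrt_nonneg a,
      Real.sqrt_nonneg b]
  have h4c : 0 ≤ (4-2*c2)*p := by nlinarith
  have h12 : 2*(c2-1) * (μ*q) ≤ 2*(c2-1) * σ := mul_le_mul_of_nonneg_left hF6 h2c.le
  rw [div_mul_eq_mul_div, one_mul, le_div_iff₀ h2c]
  nlinarith

end helpers

theorem stmt_6 {n r : ℕ} (X Z : Matrix (Fin n) (Fin r) ℝ)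
    (hsymm : Zᵀ * X = Xᵀ * Z) (hpsd : (Zᵀ * X).PosSemidef)
    (hherm : (Z * Zᵀ).IsHermitian) :
    kthLargestEig (Z * Zᵀ) hherm r * frob (Z - X) ^ 2 ≤
      (1 / (2 * (Real.sqrt 2 - 1))) * frob (Z * Zᵀ - X * Xᵀ) ^ 2 := by
  classical
  set μ := kthLargestEig (Z * Zᵀ) hherm r with hμdef
  set c2 := Real.sqrt 2 with hc2def
  have hc2sq : c2^2 = 2 := Real.sq_sqrt (by norm_num)
  have hc2nn : 0 ≤ c2 := Real.sqrt_nonneg 2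
  have hc2gt : 1 < c2 := by nlinarith
  have hc2lt : c2 < 2 := by nlinarith
  have h2c : (0:ℝ) < 2 * (c2 - 1) := by nlinarith
  have hcpos : 0 < 1 / (2 * (c2 - 1)) := one_div_pos.mpr h2c
  rcases le_or_gt μ 0 with hneg | hpos
  · have h1 : μ * frob (Z - X) ^ 2 ≤ 0 :=
      mul_nonpos_iff.mpr (Or.inr ⟨hneg, sq_nonneg _⟩)
    have h2 : 0 ≤ 1 / (2 * (c2 - 1)) * frob (Z * Zᵀ - X * Xᵀ) ^ 2 := by positivity
    linarith
  -- main case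
  · set d := Z - X with hd
    set S := Zᵀ * Z with hS
    set T := Xᵀ * X with hT
    set P := Zᵀ * X with hP
    have hPt : Pᵀ = P := by
      rw [hP, transpose_mul, transpose_transpose, ← hsymm]
    have hSt : Sᵀ = S := by
      rw [hS, transpose_mul, transpose_transpose]
    have hTt : Tᵀ = T := by
      rw [hT, transpose_mul, transpose_transpose]
    -- eigen decomposition
    obtain ⟨U, h1, h3⟩ := spec_decomp (Z * Zᵀ) hherm
    set e := hherm.eigenvalues with he
    have hpsdZ : (Z * Zᵀ).PosSemidef := by
      have := Matrix.posSemidef_self_mul_conjTranspose Z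
      rwa [Matrix.conjTranspose_eq_transpose_of_trivial] at this
    have he0 : ∀ i, 0 ≤ e i := fun i => hpsdZ.eigenvalues_nonneg i
    -- the relevant eigenvalue set
    set s := Finset.univ.filter (fun i => μ ≤ e i) with hsdef
    have hcard : min r n ≤ s.card := card_filter_kth (Z * Zᵀ) hherm r hpos
    have hrank : (Z * Zᵀ).rank ≤ min r n := by
      refine le_min ?_ ?_
      · exact le_trans (Matrix.rank_mul_le_left Z Zᵀ) (Matrix.rank_le_width Z)
      · exact Matrix.rank_le_height (Z * Zᵀ)
    have hcardnz : (Finset.univ.filter (fun i => e i ≠ 0)).card = (Z * Zᵀ).rank := by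
      rw [hherm.rank_eq_card_non_zero_eigs, Fintype.card_subtype]
    have hseq : s = Finset.univ.filter (fun i => e i ≠ 0) := by
      apply Finset.eq_of_subset_of_card_le
      · intro i hi
        rw [hsdef, Finset.mem_filter] at hi
        rw [Finset.mem_filter]
        exact ⟨Finset.mem_univ i, ne_of_gt (lt_of_lt_of_le hpos hi.2)⟩
      · rw [hcardnz]
        exact le_trans hrank hcard
    have hzero : ∀ i, ¬ μ ≤ e i → e i = 0 := by
      intro i hi
      by_contra h
      have : i ∈ s := by
        rw [hseq, Finset.mem_filter]
        exact ⟨Finset.mem_univ i, h⟩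
      rw [hsdef, Finset.mem_filter] at this
      exact hi this.2
    -- the "kernel of Z is in kernel of X" dichotomy
    have hor : (∀ w : Fin r → ℝ, Z *ᵥ w = 0 → w = 0) ∨ (∀ i, 0 < e i) := by
      rcases le_or_gt r n with hrn | hnr
      · left
        have hrmin : min r n = r := min_eq_left hrn
        have hrankZ : Z.rank = r := by
          have hle : Z.rank ≤ r := Matrix.rank_le_width Z
          have hge : r ≤ Z.rank := by
            calc r = min r n := hrmin.symm
            _ ≤ s.card := hcard
            _ = (Z * Zᵀ).rank := by rw [hseq, hcardnz]
            _ ≤ Z.rank := Matrix.rank_mul_le_left Z Zᵀ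
          omega
        have hker : LinearMap.ker Z.mulVecLin = ⊥ := by
          have hrn2 := LinearMap.finrank_range_add_finrank_ker Z.mulVecLin
          have hdom : Module.finrank ℝ (Fin r → ℝ) = r := by
            simp [Module.finrank_pi]
          rw [hdom] at hrn2
          have : Module.finrank ℝ (LinearMap.range Z.mulVecLin) = r := hrankZ
          apply Submodule.finrank_eq_zero.mp
          omega
        intro w hw
        have : w ∈ LinearMap.ker Z.mulVecLin := by
          rw [LinearMap.mem_ker, Matrix.mulVecLin_apply]
          exact hw
        rw [hker] at this
        simpa using this
      · right
        have hsuniv : s = Finset.univ := by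
          apply Finset.eq_univ_of_card
          have : min r n = n := min_eq_right hnr.le
          have h4 := hcard
          rw [this] at h4
          have h5 : s.card ≤ Finset.univ.card := Finset.card_le_univ s
          simp only [Finset.card_univ, Fintype.card_fin] at h5 ⊢
          omega
        intro i
        have : i ∈ s := hsuniv ▸ Finset.mem_univ i
        rw [hsdef, Finset.mem_filter] at this
        exact lt_of_lt_of_le hpos this.2
    have hkerX : ∀ w, Z *ᵥ w = 0 → X *ᵥ w = 0 :=
      kerX_core X Z U e h1 h3 hsymm hor
    -- scalar quantities
    set e1 := Matrix.trace (S * S) with he1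
    set e2 := Matrix.trace (T * T) with he2
    set e3 := Matrix.trace (P * P) with he3
    set e4 := Matrix.trace (S * T) with he4
    set e5 := Matrix.trace (S * P) with he5
    set e6 := Matrix.trace (T * P) with he6
    -- basic shapes
    have hAd : Zᵀ * d = S - P := by rw [hd, Matrix.mul_sub]
    have hAdt : (Zᵀ * d)ᵀ = S - P := by
      rw [hAd, transpose_sub, hSt, hPt]
    have hB : dᵀ * d = S + T - (P + P) := by
      rw [hd, transpose_sub, Matrix.sub_mul, Matrix.mul_sub, Matrix.mul_sub, ← hsymm]
      rw [← hS, ← hT, ← hP]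
      abel
    have hBt : (dᵀ * d)ᵀ = dᵀ * d := by
      rw [transpose_mul, transpose_transpose]
    -- the six monomial identities
    have hMt : (Z * Zᵀ - X * Xᵀ)ᵀ = Z * Zᵀ - X * Xᵀ := by
      rw [transpose_sub, transpose_mul, transpose_transpose, transpose_mul, transpose_transpose]
    have m1 : Matrix.trace ((Z * Zᵀ) * (Z * Zᵀ)) = e1 := by
      rw [show (Z * Zᵀ) * (Z * Zᵀ) = Z * (Zᵀ * (Z * Zᵀ)) by simp [Matrix.mul_assoc],
        Matrix.trace_mul_comm]
      rw [he1, hS]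
      congr 1
      simp [Matrix.mul_assoc]
    have m2 : Matrix.trace ((Z * Zᵀ) * (X * Xᵀ)) = e3 := by
      rw [show (Z * Zᵀ) * (X * Xᵀ) = Z * (Zᵀ * (X * Xᵀ)) by simp [Matrix.mul_assoc],
        Matrix.trace_mul_comm]
      rw [he3, hP]
      rw [show Zᵀ * (X * Xᵀ) * Z = (Zᵀ * X) * (Xᵀ * Z) by simp [Matrix.mul_assoc], ← hsymm]
    have m3 : Matrix.trace ((X * Xᵀ) * (Z * Zᵀ)) = e3 := by
      rw [Matrix.trace_mul_comm]
      exact m2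
    have m4 : Matrix.trace ((X * Xᵀ) * (X * Xᵀ)) = e2 := by
      rw [show (X * Xᵀ) * (X * Xᵀ) = X * (Xᵀ * (X * Xᵀ)) by simp [Matrix.mul_assoc],
        Matrix.trace_mul_comm]
      rw [he2, hT]
      congr 1
      simp [Matrix.mul_assoc]
    have hR : Matrix.trace ((Z * Zᵀ - X * Xᵀ)ᵀ * (Z * Zᵀ - X * Xᵀ)) = e1 + e2 - 2*e3 := by
      rw [hMt, sub_mul, mul_sub, mul_sub, Matrix.trace_sub, Matrix.trace_sub, Matrix.trace_sub,
        m1, m2, m3, m4]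
      ring
    -- r×r identities
    have hα : Matrix.trace ((Zᵀ * d)ᵀ * (Zᵀ * d)) = e1 - 2*e5 + e3 := by
      rw [hAdt, hAd, sub_mul, mul_sub, mul_sub, Matrix.trace_sub, Matrix.trace_sub,
        Matrix.trace_sub, Matrix.trace_mul_comm P S]
      ring
    have hβ : Matrix.trace ((dᵀ * d)ᵀ * (dᵀ * d)) = e1 + e2 + 4*e3 + 2*e4 - 4*e5 - 4*e6 := by
      rw [hBt, hB]
      simp only [Matrix.sub_mul, Matrix.mul_sub, Matrix.add_mul, Matrix.mul_add,
        Matrix.trace_sub, Matrix.trace_add]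
      rw [Matrix.trace_mul_comm T S, Matrix.trace_mul_comm P S, Matrix.trace_mul_comm P T]
      ring
    have hγ : Matrix.trace ((Zᵀ * d)ᵀ * (dᵀ * d)) = e1 + e4 - 3*e5 - e6 + 2*e3 := by
      rw [hAdt, hB]
      simp only [Matrix.sub_mul, Matrix.mul_sub, Matrix.add_mul, Matrix.mul_add,
        Matrix.trace_sub, Matrix.trace_add]
      rw [Matrix.trace_mul_comm P S, Matrix.trace_mul_comm P T]
      ring
    have hσ : Matrix.trace (S * (dᵀ * d)) = e1 + e4 - 2*e5 := by
      rw [hB]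
      simp only [Matrix.mul_sub, Matrix.mul_add, Matrix.trace_sub, Matrix.trace_add]
      ring
    have hp : Matrix.trace (P * (dᵀ * d)) = e5 + e6 - 2*e3 := by
      rw [hB]
      simp only [Matrix.mul_sub, Matrix.mul_add, Matrix.trace_sub, Matrix.trace_add]
      rw [Matrix.trace_mul_comm P S, Matrix.trace_mul_comm P T]
      ring
    -- nonnegativity and CS
    have hα0 : 0 ≤ Matrix.trace ((Zᵀ * d)ᵀ * (Zᵀ * d)) := frob_nonneg' _
    have hβ0 : 0 ≤ Matrix.trace ((dᵀ * d)ᵀ * (dᵀ * d)) := frob_nonneg' _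
    have hCS : Matrix.trace ((Zᵀ * d)ᵀ * (dᵀ * d)) ^ 2 ≤
        Matrix.trace ((Zᵀ * d)ᵀ * (Zᵀ * d)) * Matrix.trace ((dᵀ * d)ᵀ * (dᵀ * d)) :=
      trace_CS _ _
    have hp0 : 0 ≤ Matrix.trace (P * (dᵀ * d)) := by
      rw [trace_quad]
      apply Finset.sum_nonneg
      intro i _
      have := hpsd.dotProduct_mulVec_nonneg (d i)
      simpa using this
    -- per-row inequality
    have hqrows : Matrix.trace (dᵀ * d) = ∑ i, (d i) ⬝ᵥ (d i) := by
      rw [← Matrix.one_mul (dᵀ * d), trace_quad]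
      simp
    have hσrows : Matrix.trace (S * (dᵀ * d)) = ∑ i, (Z *ᵥ d i) ⬝ᵥ (Z *ᵥ d i) := by
      rw [trace_quad]
      refine Finset.sum_congr rfl fun i _ => ?_
      rw [hS, ← Matrix.mulVec_mulVec, dotProduct_comm, transfer]
    have hF6 : μ * Matrix.trace (dᵀ * d) ≤ Matrix.trace (S * (dᵀ * d)) := by
      rw [hqrows, hσrows, Finset.mul_sum]
      apply Finset.sum_le_sum
      intro i _
      apply key_core Z U e h1 h3 hpos hzero
      intro w hw
      have hXw := hkerX w hw
      have hdw : d *ᵥ w = 0 := by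
        rw [hd, Matrix.sub_mulVec, hw, hXw, sub_zero]
      exact congrFun hdw i
    -- trace of dᵀd as frobenius
    have hfd : frob (Z - X) ^ 2 = Matrix.trace (dᵀ * d) := by
      rw [frob_sq]
    have hfM : frob (Z * Zᵀ - X * Xᵀ) ^ 2 = e1 + e2 - 2*e3 := by
      rw [frob_sq, hR]
    have hiden : e1 + e2 - 2*e3 =
        2*(c2-1)*Matrix.trace (S * (dᵀ * d))
        + (2*Matrix.trace ((Zᵀ * d)ᵀ * (Zᵀ * d)) + Matrix.trace ((dᵀ * d)ᵀ * (dᵀ * d))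
           - 2*c2*Matrix.trace ((Zᵀ * d)ᵀ * (dᵀ * d)))
        + (4-2*c2)*Matrix.trace (P * (dᵀ * d)) := by
      rw [hσ, hα, hβ, hγ, hp]
      ring
    rw [hfd, hfM]
    exact final_scalar c2 μ _ _ _ _ _ _ _ hc2sq hc2nn hα0 hβ0 hCS hp0 hF6 hiden
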